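/- A Laurent polynomial p(t) = Σ_{k=-m}^{n} c_k t^k in t = q^γ satisfies p(q/(abcd t)) = p(t) identically if and only if p(t) can be written as a polynomial (with complex coefficients) in Λ(t) = t^{-1}(1-t)(1-abcd t/q). -/

import Mathlib

open Polynomial

noncomputable def QQ (u : ℂ) : ℕ → Polynomial ℂ
  | 0 => 2
  | 1 => C u⁻¹ * (X + C (1 + u))
  | (k + 2) => C u⁻¹ * (X + C (1 + u)) * QQ u (k + 1) - C u⁻¹ * QQ u k

lemma rec_id (u t P Qv R : ℂ) (hu : u ≠ 0) (ht : t ≠ 0) :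
    u⁻¹ * (u * t + t⁻¹) * (P * t + u⁻¹ * (R * (Qv * t⁻¹))) - u⁻¹ * (P + R * Qv) =
      P * (t * t) + u⁻¹ * (u⁻¹ * (R * (Qv * (t⁻¹ * t⁻¹)))) := by
  field_simp
  ring

lemma QQ_eval (u : ℂ) (hu : u ≠ 0) (t : ℂ) (ht : t ≠ 0) (k : ℕ) :
    (QQ u k).eval (u * t + t⁻¹ - (1 + u)) = t ^ k + u⁻¹ ^ k * t⁻¹ ^ k := by
  induction k using Nat.twoStepInduction with
  | zero => simp [QQ]; norm_num
  | one => simp [QQ]; field_simp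
  | more k ih1 ih2 =>
    have hk : (QQ u (k + 2)).eval (u * t + t⁻¹ - (1 + u)) =
        u⁻¹ * (u * t + t⁻¹) * (t ^ (k + 1) + u⁻¹ ^ (k + 1) * t⁻¹ ^ (k + 1)) -
          u⁻¹ * (t ^ k + u⁻¹ ^ k * t⁻¹ ^ k) := by
      simp only [QQ, eval_sub, eval_mul, eval_add, eval_C, eval_X, ih1, ih2]
      ring
    rw [hk]
    simp only [pow_succ]
    linear_combination rec_id u t (t ^ k) (t⁻¹ ^ k) (u⁻¹ ^ k) hu ht

lemma extraction (N : ℕ) (e : ℤ → ℂ)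
    (h : ∀ t : ℂ, t ≠ 0 → ∑ k ∈ Finset.Icc (-(N : ℤ)) (N : ℤ), e k * t ^ k = 0) :
    ∀ k ∈ Finset.Icc (-(N : ℤ)) (N : ℤ), e k = 0 := by
  set R : Polynomial ℂ := ∑ j ∈ Finset.range (2 * N + 1), C (e ((j : ℤ) - N)) * X ^ j with hR
  have hRz : R = 0 := by
    apply Polynomial.eq_zero_of_infinite_isRoot
    apply Set.Infinite.mono (s := {(0 : ℂ)}ᶜ)
    · intro x hx
      have hx0 : x ≠ 0 := hx
      have key : R.eval x = x ^ N * ∑ k ∈ Finset.Icc (-(N : ℤ)) (N : ℤ), e k * x ^ k := by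
        rw [hR, eval_finset_sum, Finset.mul_sum]
        refine Finset.sum_nbij' (fun j => (j : ℤ) - N) (fun k => (k + N).toNat) ?_ ?_ ?_ ?_ ?_
        · intro j hj; simp at hj ⊢; omega
        · intro k hk; simp at hk ⊢; omega
        · intro j hj; simp at hj; omega
        · intro k hk; simp at hk; omega
        · intro j hj
          simp only [eval_mul, eval_C, eval_pow, eval_X, Finset.mem_range] at hj ⊢
          have h1 : (x ^ N : ℂ) * x ^ ((j : ℤ) - N) = x ^ j := by
            rw [← zpow_natCast x N, ← zpow_add₀ hx0, ← zpow_natCast x j]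
            congr 1; omega
          rw [← h1]; ring
      simp only [Set.mem_setOf_eq, IsRoot]
      rw [key, h x hx0, mul_zero]
    · exact (Set.finite_singleton 0).infinite_compl
  intro k hk
  simp only [Finset.mem_Icc] at hk
  have hj : (k + N).toNat ∈ Finset.range (2 * N + 1) := by simp; omega
  have hco : R.coeff (k + N).toNat = e k := by
    rw [hR, finset_sum_coeff]
    rw [Finset.sum_eq_single ((k + N).toNat)]
    · rw [coeff_C_mul, coeff_X_pow, if_pos rfl, mul_one]
      congr 1; omega
    · intro b hb hbne
      rw [coeff_C_mul, coeff_X_pow, if_neg (fun h => hbne h.symm), mul_zero]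
    · intro habs; exact absurd hj habs
  rw [hRz] at hco
  simpa using hco.symm


/-- A Laurent polynomial `p(t) = Σ_{k=-m}^{n} c_k t^k` satisfies
`p(q/(abcd·t)) = p(t)` identically (on `t ≠ 0`) if and only if `p` can be
written as a polynomial in `Λ(t) = t⁻¹(1-t)(1-abcd·t/q)`. -/
theorem laurent_invariant_iff_polynomial_in_Lambda
    (q : ℝ) (hq : 0 < q) (hq1 : q < 1)
    (a b c d : ℂ) (ha : a ≠ 0) (hb : b ≠ 0) (hc : c ≠ 0) (hd : d ≠ 0)
    (m n : ℕ) (cf : ℤ → ℂ) (p : ℂ → ℂ)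
    (hp : ∀ t : ℂ, t ≠ 0 →
      p t = ∑ k ∈ Finset.Icc (-(m : ℤ)) (n : ℤ), cf k * t ^ k) :
    (∀ t : ℂ, t ≠ 0 → p ((q : ℂ) / (a * b * c * d * t)) = p t) ↔
      ∃ P : Polynomial ℂ, ∀ t : ℂ, t ≠ 0 →
        p t = P.eval (t⁻¹ * (1 - t) * (1 - a * b * c * d * t / (q : ℂ))) := by
  have hq0 : (q : ℂ) ≠ 0 := by
    simpa using Complex.ofReal_ne_zero.mpr hq.ne'
  have habcd : a * b * c * d ≠ 0 := by simp [ha, hb, hc, hd]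
  set u : ℂ := a * b * c * d / (q : ℂ) with hu_def
  have hu : u ≠ 0 := div_ne_zero habcd hq0
  have hLam : ∀ t : ℂ, t ≠ 0 →
      t⁻¹ * (1 - t) * (1 - a * b * c * d * t / (q : ℂ)) = u * t + t⁻¹ - (1 + u) := by
    intro t ht
    rw [hu_def]
    field_simp
    ring
  have hinv_ne : ∀ t : ℂ, t ≠ 0 → (q : ℂ) / (a * b * c * d * t) ≠ 0 :=
    fun t ht => div_ne_zero hq0 (mul_ne_zero habcd ht)
  have hLinv : ∀ t : ℂ, t ≠ 0 →
      ((q : ℂ) / (a * b * c * d * t))⁻¹ * (1 - (q : ℂ) / (a * b * c * d * t)) *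
          (1 - a * b * c * d * ((q : ℂ) / (a * b * c * d * t)) / (q : ℂ))
        = t⁻¹ * (1 - t) * (1 - a * b * c * d * t / (q : ℂ)) := by
    intro t ht
    field_simp
    ring
  constructor
  · intro H
    set N := max m n with hN
    set ch : ℤ → ℂ := fun k => if k ∈ Finset.Icc (-(m : ℤ)) (n : ℤ) then cf k else 0 with hch_def
    have hsub1 : Finset.Icc (-(m : ℤ)) (n : ℤ) ⊆ Finset.Icc (-(N : ℤ)) (N : ℤ) := by
      intro x; simp [hN]; omega
    have hsub2 : Finset.Icc (-(n : ℤ)) (m : ℤ) ⊆ Finset.Icc (-(N : ℤ)) (N : ℤ) := by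
      intro x; simp [hN]; omega
    have ext_sum : ∀ (S : Finset ℤ), S ⊆ Finset.Icc (-(N : ℤ)) (N : ℤ) → ∀ (f : ℤ → ℂ) (t : ℂ),
        ∑ k ∈ Finset.Icc (-(N : ℤ)) (N : ℤ), (if k ∈ S then f k else 0) * t ^ k
          = ∑ k ∈ S, f k * t ^ k := by
      intro S hS f t
      rw [← Finset.sum_subset hS (fun x _ hx2 => by simp [hx2])]
      exact Finset.sum_congr rfl (fun x hx => by simp [hx])
    have hpN : ∀ t : ℂ, t ≠ 0 → p t = ∑ k ∈ Finset.Icc (-(N : ℤ)) (N : ℤ), ch k * t ^ k := by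
      intro t ht
      rw [hp t ht]
      simp only [hch_def]
      exact (ext_sum _ hsub1 cf t).symm
    have hsval : ∀ t : ℂ, t ≠ 0 → (q : ℂ) / (a * b * c * d * t) = (u * t)⁻¹ := by
      intro t ht
      rw [hu_def]
      field_simp
    have hsym0 : ∀ t : ℂ, t ≠ 0 → ∑ k ∈ Finset.Icc (-(N : ℤ)) (N : ℤ),
        ((if k ∈ Finset.Icc (-(n : ℤ)) (m : ℤ) then cf (-k) * u ^ k else 0) - ch k) * t ^ k = 0 := by
      intro t ht
      have h1 := H t ht
      rw [hp t ht, hp _ (hinv_ne t ht)] at h1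
      have h2 : ∑ k ∈ Finset.Icc (-(m : ℤ)) (n : ℤ), cf k * ((q : ℂ) / (a * b * c * d * t)) ^ k
          = ∑ k ∈ Finset.Icc (-(n : ℤ)) (m : ℤ), cf (-k) * u ^ k * t ^ k := by
        refine Finset.sum_nbij' (fun k => -k) (fun k => -k) ?_ ?_ ?_ ?_ ?_
        · intro x hx; simp at hx ⊢; omega
        · intro x hx; simp at hx ⊢; omega
        · intro x hx; omega
        · intro x hx; omega
        · intro x hx
          rw [hsval t ht, inv_zpow, ← zpow_neg, mul_zpow, neg_neg]
          ring
      rw [h2] at h1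
      simp only [sub_mul, Finset.sum_sub_distrib, hch_def]
      rw [ext_sum _ hsub2 (fun k => cf (-k) * u ^ k) t, ext_sum _ hsub1 cf t]
      exact sub_eq_zero.mpr h1
    have hcoef := extraction N _ hsym0
    have hrel : ∀ k : ℤ,
        (if k ∈ Finset.Icc (-(n : ℤ)) (m : ℤ) then cf (-k) * u ^ k else 0) = ch k := by
      intro k
      by_cases hk : k ∈ Finset.Icc (-(N : ℤ)) (N : ℤ)
      · exact sub_eq_zero.mp (hcoef k hk)
      · have h1 : k ∉ Finset.Icc (-(n : ℤ)) (m : ℤ) := fun h => hk (hsub2 h)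
        have h2 : k ∉ Finset.Icc (-(m : ℤ)) (n : ℤ) := fun h => hk (hsub1 h)
        simp only [hch_def]
        rw [if_neg h1, if_neg h2]
    have hchsym : ∀ k : ℤ, ch (-k) = ch k * u ^ (-k) := by
      intro k
      rw [← hrel (-k)]
      have hmem : (-k ∈ Finset.Icc (-(n : ℤ)) (m : ℤ)) ↔ (k ∈ Finset.Icc (-(m : ℤ)) (n : ℤ)) := by
        simp; omega
      by_cases hk : k ∈ Finset.Icc (-(m : ℤ)) (n : ℤ)
      · rw [if_pos (hmem.mpr hk), neg_neg]
        simp only [hch_def]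
        rw [if_pos hk]
      · rw [if_neg (fun h => hk (hmem.mp h))]
        simp only [hch_def]
        rw [if_neg hk, zero_mul]
    refine ⟨Polynomial.C (ch 0) + ∑ k ∈ Finset.Icc (1 : ℤ) (N : ℤ),
        Polynomial.C (ch k) * QQ u k.toNat, ?_⟩
    intro t ht
    rw [hpN t ht, hLam t ht]
    rw [Polynomial.eval_add, Polynomial.eval_C, Polynomial.eval_finset_sum]
    have hterm : ∀ k ∈ Finset.Icc (1 : ℤ) (N : ℤ),
        (Polynomial.C (ch k) * QQ u k.toNat).eval (u * t + t⁻¹ - (1 + u))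
          = ch k * t ^ k + ch (-k) * t ^ (-k) := by
      intro k hk
      simp only [Finset.mem_Icc] at hk
      rw [Polynomial.eval_mul, Polynomial.eval_C, QQ_eval u hu t ht, hchsym k]
      have hk1 : (k.toNat : ℤ) = k := by omega
      have e1 : t ^ k.toNat = t ^ k := by rw [← zpow_natCast, hk1]
      have e2 : t⁻¹ ^ k.toNat = t ^ (-k) := by
        rw [← zpow_natCast t⁻¹, hk1, inv_zpow, ← zpow_neg]
      have e3 : u⁻¹ ^ k.toNat = u ^ (-k) := by
        rw [← zpow_natCast u⁻¹, hk1, inv_zpow, ← zpow_neg]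
      rw [e1, e2, e3]
      ring
    rw [Finset.sum_congr rfl hterm]
    have hsplit : Finset.Icc (-(N : ℤ)) (N : ℤ)
        = Finset.Icc (-(N : ℤ)) (-1) ∪ Finset.Icc (0 : ℤ) (N : ℤ) := by
      ext x; simp; omega
    have hdisj : Disjoint (Finset.Icc (-(N : ℤ)) (-1)) (Finset.Icc (0 : ℤ) (N : ℤ)) := by
      simp only [Finset.disjoint_left, Finset.mem_Icc]
      intro x hx hx2; omega
    rw [hsplit, Finset.sum_union hdisj]
    have h0ins : Finset.Icc (0 : ℤ) (N : ℤ) = insert (0 : ℤ) (Finset.Icc 1 (N : ℤ)) := by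
      ext x; simp; omega
    rw [h0ins, Finset.sum_insert (by simp)]
    have hnegsum : ∑ k ∈ Finset.Icc (-(N : ℤ)) (-1), ch k * t ^ k
        = ∑ k ∈ Finset.Icc (1 : ℤ) (N : ℤ), ch (-k) * t ^ (-k) := by
      refine Finset.sum_nbij' (fun k => -k) (fun k => -k) ?_ ?_ ?_ ?_ ?_
      · intro x hx; simp at hx ⊢; omega
      · intro x hx; simp at hx ⊢; omega
      · intro x hx; omega
      · intro x hx; omega
      · intro x hx; rw [neg_neg]
    rw [hnegsum, Finset.sum_add_distrib]
    simp only [zpow_zero, mul_one]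
    ring
  · rintro ⟨P, hP⟩ t ht
    rw [hP _ (hinv_ne t ht), hP t ht, hLinv t ht]
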